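/- arXiv:math/0011045 — 4 statements merged into one kernel-verified Lean document; each statement's English description precedes it below -/
import Mathlib

section
/- Let I be a finitely generated ideal of E_n, let r ≥ 1, and let (f_1, …, f_a) and (g_1, …, g_b) be two finite families of elements of E_n, each of which generates I. Then the ideal of E_n generated by I together with all r×r minors of the Jacobian matrix (∂f_j/∂x_i)_{1≤i≤n,1≤j≤a} is equal to the ideal of E_n generated by I together with all r×r minors of the Jacobian matrix (∂g_j/∂x_i)_{1≤i≤n,1≤j≤b}; i.e., the Jacobian extension Δ_r(I) does not depend on the choice of generators of I. -/
open Filter Topology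
open scoped ContDiff

set_option synthInstance.maxHeartbeats 400000

noncomputable section

/-- The value at `0` of a germ at `𝓝 (0 : ℝⁿ)`. -/
def germValue {n : ℕ} (φ : Filter.Germ (nhds (0 : Fin n → ℝ)) ℝ) : ℝ :=
  Filter.Germ.liftOn φ (fun f => f 0) fun _ _ h => h.eq_of_nhds

@[simp] lemma germValue_coe {n : ℕ} (f : (Fin n → ℝ) → ℝ) :
    germValue (↑f : Filter.Germ (nhds (0 : Fin n → ℝ)) ℝ) = f 0 := rfl

/-- `E_n`: the ring of germs at `0` of smooth real-valued functions on `ℝⁿ`,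
realized as a subring of the ring of all germs at `0`. -/
def En (n : ℕ) : Subring (Filter.Germ (nhds (0 : Fin n → ℝ)) ℝ) where
  carrier := {φ | ∃ f : (Fin n → ℝ) → ℝ, ContDiff ℝ ∞ f ∧ φ = ↑f}
  mul_mem' := by
    rintro a b ⟨f, hf, rfl⟩ ⟨g, hg, rfl⟩
    exact ⟨f * g, hf.mul hg, (Filter.Germ.coe_mul f g).symm⟩
  one_mem' := ⟨1, contDiff_const, rfl⟩
  add_mem' := by
    rintro a b ⟨f, hf, rfl⟩ ⟨g, hg, rfl⟩
    exact ⟨f + g, hf.add hg, (Filter.Germ.coe_add f g).symm⟩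
  zero_mem' := ⟨0, contDiff_const, rfl⟩
  neg_mem' := by
    rintro a ⟨f, hf, rfl⟩
    exact ⟨-f, hf.neg, (Filter.Germ.coe_neg f).symm⟩

lemma mem_En_iff {n : ℕ} {φ : Filter.Germ (nhds (0 : Fin n → ℝ)) ℝ} :
    φ ∈ En n ↔ ∃ f : (Fin n → ℝ) → ℝ, ContDiff ℝ ∞ f ∧ φ = ↑f := Iff.rfl

/-- The germ of a smooth function, as an element of `E_n`. -/
def germOf {n : ℕ} (f : (Fin n → ℝ) → ℝ) (hf : ContDiff ℝ ∞ f) : En n :=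
  ⟨↑f, f, hf, rfl⟩

/-- The inclusion of `ℝ` in `E_n` as constant germs. -/
def constHom (n : ℕ) : ℝ →+* En n where
  toFun c := germOf (fun _ => c) contDiff_const
  map_one' := rfl
  map_mul' a b := by
    apply Subtype.ext
    exact (Filter.Germ.coe_mul _ _).symm
  map_zero' := rfl
  map_add' a b := by
    apply Subtype.ext
    exact (Filter.Germ.coe_add _ _).symm

instance EnAlgebra (n : ℕ) : Algebra ℝ (En n) := (constHom n).toAlgebra

/-- The maximal ideal `m_n` of `E_n`: germs vanishing at the origin. -/
def mId (n : ℕ) : Ideal (En n) where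
  carrier := {φ | germValue (φ : Filter.Germ (nhds (0 : Fin n → ℝ)) ℝ) = 0}
  add_mem' := by
    rintro ⟨a, f, hf, rfl⟩ ⟨b, g, hg, rfl⟩ ha hb
    have : ((⟨↑f, _, hf, rfl⟩ : En n) + ⟨↑g, _, hg, rfl⟩ : En n).1
        = ((↑(f + g) : Filter.Germ (nhds (0 : Fin n → ℝ)) ℝ)) := (Filter.Germ.coe_add f g).symm
    show germValue _ = 0
    rw [this, germValue_coe]
    simpa using by
      have ha' : f 0 = 0 := by simpa using ha
      have hb' : g 0 = 0 := by simpa using hb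
      show f 0 + g 0 = 0
      rw [ha', hb', add_zero]
  zero_mem' := by simp [germValue]; rfl
  smul_mem' := by
    rintro ⟨c, g, hg, rfl⟩ ⟨x, f, hf, rfl⟩ hx
    have hx' : f 0 = 0 := by simpa using hx
    show germValue _ = 0
    have : ((⟨↑g, _, hg, rfl⟩ : En n) * ⟨↑f, _, hf, rfl⟩ : En n).1
        = ((↑(g * f) : Filter.Germ (nhds (0 : Fin n → ℝ)) ℝ)) := (Filter.Germ.coe_mul g f).symm
    rw [smul_eq_mul, this, germValue_coe]
    show g 0 * f 0 = 0
    rw [hx', mul_zero]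

/-- The `i`-th partial derivative of a function on `ℝⁿ`. -/
def pd {n : ℕ} (i : Fin n) (f : (Fin n → ℝ) → ℝ) : (Fin n → ℝ) → ℝ :=
  fun x => fderiv ℝ f x (Pi.single i 1)

/-- The ideal of `E_n` generated by the germs at `0` of a set of functions. -/
def gSpan (n : ℕ) (S : Set ((Fin n → ℝ) → ℝ)) : Ideal (En n) :=
  Ideal.span {φ : En n | ∃ f ∈ S, (φ : Filter.Germ (nhds (0 : Fin n → ℝ)) ℝ) = ↑f}

/-- The Jacobian ideal of (the germ at `0` of) a function `f` on `ℝⁿ`: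
the ideal of `E_n` generated by the germs of the partial derivatives of `f`. -/
def JId (n : ℕ) (f : (Fin n → ℝ) → ℝ) : Ideal (En n) :=
  gSpan n (Set.range fun i : Fin n => pd i f)

instance EnModR (n : ℕ) : Module ℝ (En n) := Algebra.toModule

instance EnTowerSelf (n : ℕ) : IsScalarTower ℝ (En n) (En n) := IsScalarTower.right

instance EnIdealTower (n : ℕ) (I : Ideal (En n)) : IsScalarTower ℝ (En n) ↥I :=
  Submodule.isScalarTower I

instance EnIdealModule (n : ℕ) (I : Ideal (En n)) : Module ℝ ↥I := Submodule.module' I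

instance EnIdealQuotModule (n : ℕ) (I : Ideal (En n)) (N : Submodule (En n) ↥I) :
    Module ℝ (↥I ⧸ N) := Submodule.Quotient.module' N

/-- The dimension (a cardinal) of the real vector space `m_n / J`,
for an ideal `J` of `E_n` (intended: `J ⊆ m_n`). -/
def quotDim (n : ℕ) (J : Ideal (En n)) : Cardinal :=
  Module.rank ℝ (↥(mId n) ⧸ Submodule.comap (mId n).subtype (J : Submodule (En n) (En n)))

/-- The codimension of the germ at `0` of `f : ℝⁿ → ℝ`: `dim_ℝ (m_n / J(f))`. -/
def codim (n : ℕ) (f : (Fin n → ℝ) → ℝ) : Cardinal := quotDim n (JId n f)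

lemma ContDiff.pdSmooth {n : ℕ} {f : (Fin n → ℝ) → ℝ} (hf : ContDiff ℝ ∞ f) (i : Fin n) :
    ContDiff ℝ ∞ (pd i f) :=
  (hf.fderiv_right (by simp)).clm_apply contDiff_const

/-- A chosen smooth representative of an element of `E_n`. -/
def smoothRep {n : ℕ} (φ : En n) : (Fin n → ℝ) → ℝ := (mem_En_iff.1 φ.2).choose

lemma smoothRep_smooth {n : ℕ} (φ : En n) : ContDiff ℝ ∞ (smoothRep φ) :=
  (mem_En_iff.1 φ.2).choose_spec.1

lemma smoothRep_spec {n : ℕ} (φ : En n) :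
    (φ : Filter.Germ (nhds (0 : Fin n → ℝ)) ℝ) = ↑(smoothRep φ) :=
  (mem_En_iff.1 φ.2).choose_spec.2

/-- The `i`-th partial derivative of an element of `E_n` (via a chosen smooth
representative; the resulting germ does not depend on the choice). -/
def pderivE {n : ℕ} (i : Fin n) (φ : En n) : En n :=
  germOf (pd i (smoothRep φ)) ((smoothRep_smooth φ).pdSmooth i)

lemma pderivE_congr {n : ℕ} (i : Fin n) (φ : En n) (h : (Fin n → ℝ) → ℝ)
    (hh : ContDiff ℝ ∞ h) (heq : (φ : Filter.Germ (nhds (0 : Fin n → ℝ)) ℝ) = ↑h) :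
    pderivE i φ = germOf (pd i h) (hh.pdSmooth i) := by
  have h1 : smoothRep φ =ᶠ[𝓝 (0 : Fin n → ℝ)] h :=
    Filter.Germ.coe_eq.mp ((smoothRep_spec φ).symm.trans heq)
  have h2 : pd i (smoothRep φ) =ᶠ[𝓝 (0 : Fin n → ℝ)] pd i h := by
    filter_upwards [h1.fderiv (𝕜 := ℝ)] with x hx
    simp only [pd, hx]
  exact Subtype.ext (Filter.Germ.coe_eq.mpr h2)

lemma smooth_one_le {n : ℕ} {f : (Fin n → ℝ) → ℝ} (hf : ContDiff ℝ ∞ f) :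
    Differentiable ℝ f := hf.differentiable (by norm_num)

lemma pd_add {n : ℕ} {f g : (Fin n → ℝ) → ℝ} (hf : ContDiff ℝ ∞ f) (hg : ContDiff ℝ ∞ g)
    (i : Fin n) : pd i (f + g) = pd i f + pd i g := by
  funext x
  show fderiv ℝ (fun y => f y + g y) x (Pi.single i 1) = _
  rw [fderiv_fun_add ((smooth_one_le hf) x) ((smooth_one_le hg) x)]
  simp [pd]

lemma pd_mul {n : ℕ} {f g : (Fin n → ℝ) → ℝ} (hf : ContDiff ℝ ∞ f) (hg : ContDiff ℝ ∞ g)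
    (i : Fin n) : pd i (f * g) = pd i f * g + f * pd i g := by
  funext x
  show fderiv ℝ (fun y => f y * g y) x (Pi.single i 1) = _
  rw [fderiv_fun_mul ((smooth_one_le hf) x) ((smooth_one_le hg) x)]
  simp [pd]
  ring

lemma pderivE_add {n : ℕ} (i : Fin n) (φ ψ : En n) :
    pderivE i (φ + ψ) = pderivE i φ + pderivE i ψ := by
  have hφ := smoothRep_smooth φ
  have hψ := smoothRep_smooth ψ
  have key : ((φ + ψ : En n) : Filter.Germ (nhds (0 : Fin n → ℝ)) ℝ)
      = ↑(smoothRep φ + smoothRep ψ) := by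
    show φ.val + ψ.val = _
    rw [smoothRep_spec φ, smoothRep_spec ψ]
    exact (Filter.Germ.coe_add _ _).symm
  have e1 := pderivE_congr i (φ + ψ) (smoothRep φ + smoothRep ψ) (hφ.add hψ) key
  rw [e1]
  apply Subtype.ext
  show (↑(pd i (smoothRep φ + smoothRep ψ)) : Filter.Germ (nhds (0 : Fin n → ℝ)) ℝ)
      = ↑(pd i (smoothRep φ)) + ↑(pd i (smoothRep ψ))
  rw [pd_add hφ hψ]
  exact Filter.Germ.coe_add _ _

lemma pderivE_zero {n : ℕ} (i : Fin n) : pderivE i (0 : En n) = 0 := by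
  rw [pderivE_congr i 0 (fun _ => 0) contDiff_const rfl]
  apply Subtype.ext
  show (↑(pd i fun _ => 0) : Filter.Germ (nhds (0 : Fin n → ℝ)) ℝ) = ↑(fun _ : Fin n → ℝ => (0:ℝ))
  have : pd i (fun _ : Fin n → ℝ => (0:ℝ)) = fun _ => 0 := by
    funext x; simp [pd]
  rw [this]

lemma pderivE_mul {n : ℕ} (i : Fin n) (φ ψ : En n) :
    pderivE i (φ * ψ) = pderivE i φ * ψ + φ * pderivE i ψ := by
  have hφ := smoothRep_smooth φ
  have hψ := smoothRep_smooth ψ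
  have key : ((φ * ψ : En n) : Filter.Germ (nhds (0 : Fin n → ℝ)) ℝ)
      = ↑(smoothRep φ * smoothRep ψ) := by
    show φ.val * ψ.val = _
    rw [smoothRep_spec φ, smoothRep_spec ψ]
    exact (Filter.Germ.coe_mul _ _).symm
  have e1 := pderivE_congr i (φ * ψ) (smoothRep φ * smoothRep ψ) (hφ.mul hψ) key
  rw [e1]
  apply Subtype.ext
  show (↑(pd i (smoothRep φ * smoothRep ψ)) : Filter.Germ (nhds (0 : Fin n → ℝ)) ℝ)
      = ↑(pd i (smoothRep φ)) * ψ.val + φ.val * ↑(pd i (smoothRep ψ))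
  rw [pd_mul hφ hψ, smoothRep_spec φ, smoothRep_spec ψ, Filter.Germ.coe_add,
    Filter.Germ.coe_mul, Filter.Germ.coe_mul]

/-- `pderivE i` as an additive monoid homomorphism. -/
def pderivHom {n : ℕ} (i : Fin n) : En n →+ En n where
  toFun := pderivE i
  map_zero' := pderivE_zero i
  map_add' := pderivE_add i


lemma det_lin_comb_zero {Q : Type*} [CommRing Q] {r b : ℕ} (C : Fin r → Fin b → Q)
    (P : Fin b → Fin r → Q)
    (h0 : ∀ τ : Fin r → Fin b, Matrix.detRowAlternating (fun j => P (τ j)) = (0 : Q)) :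
    Matrix.detRowAlternating (fun j => ∑ k, C j k • P k) = (0 : Q) := by
  rw [show (fun j => ∑ k, C j k • P k) = (fun j => ∑ k, (fun j k => C j k • P k) j k) from rfl]
  rw [show (Matrix.detRowAlternating (fun j => ∑ k, (fun j k => C j k • P k) j k))
      = Matrix.detRowAlternating.toMultilinearMap (fun j => ∑ k, (fun j k => C j k • P k) j k)
      from rfl]
  rw [MultilinearMap.map_sum]
  refine Finset.sum_eq_zero fun τ _ => ?_
  show Matrix.detRowAlternating.toMultilinearMap (fun j => C j (τ j) • P (τ j)) = 0
  rw [MultilinearMap.map_smul_univ]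
  show (∏ j, C j (τ j)) • Matrix.detRowAlternating (fun j => P (τ j)) = 0
  rw [h0 τ, smul_zero]

set_option maxHeartbeats 1000000 in
lemma minor_span_le {n r : ℕ} (I : Ideal (En n)) {a b : ℕ} (f : Fin a → En n) (g : Fin b → En n)
    (hf : ∀ j, f j ∈ Ideal.span (Set.range g)) (hg : ∀ k, g k ∈ I) :
    Ideal.span {φ : En n | ∃ (ρ : Fin r → Fin n) (σ : Fin r → Fin a),
        φ = (Matrix.of fun i j => pderivE (ρ i) (f (σ j))).det}
      ≤ I ⊔ Ideal.span {φ : En n | ∃ (ρ : Fin r → Fin n) (σ : Fin r → Fin b),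
        φ = (Matrix.of fun i j => pderivE (ρ i) (g (σ j))).det} := by
  set K := I ⊔ Ideal.span {φ : En n | ∃ (ρ : Fin r → Fin n) (σ : Fin r → Fin b),
        φ = (Matrix.of fun i j => pderivE (ρ i) (g (σ j))).det} with hK
  rw [Ideal.span_le]
  rintro φ ⟨ρ, σ, rfl⟩
  choose c hc using fun j => (Submodule.mem_span_range_iff_exists_fun _).mp (hf j)
  show _ ∈ K
  rw [← Ideal.Quotient.eq_zero_iff_mem]
  set π := Ideal.Quotient.mk K with hπ
  have hIK : I ≤ K := le_sup_left
  have key : ∀ (i : Fin n) (j : Fin a),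
      π (pderivE i (f j)) = ∑ k, π (c j k) * π (pderivE i (g k)) := by
    intro i j
    have h1 : pderivE i (f j) = ∑ k, pderivE i (c j k * g k) := by
      have h0 := congrArg (pderivHom i) (hc j)
      simp only [map_sum, smul_eq_mul] at h0
      exact h0.symm
    have h2 : ∀ k, π (pderivE i (c j k * g k)) = π (c j k) * π (pderivE i (g k)) := by
      intro k
      rw [pderivE_mul, map_add, map_mul, map_mul,
        Ideal.Quotient.eq_zero_iff_mem.mpr (hIK (hg k)), mul_zero, zero_add]
    rw [h1, map_sum]
    exact Finset.sum_congr rfl fun k _ => h2 k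
  rw [RingHom.map_det, RingHom.mapMatrix_apply]
  have hM : (Matrix.of fun i j => pderivE (ρ i) (f (σ j))).map π
      = Matrix.of fun i j => ∑ k, π (c (σ j) k) * π (pderivE (ρ i) (g k)) := by
    ext i j
    exact key (ρ i) (σ j)
  rw [hM, ← Matrix.det_transpose]
  set P : Fin b → (Fin r → (↥(En n) ⧸ K)) := fun k i => π (pderivE (ρ i) (g k)) with hP
  have harg : Matrix.transpose (Matrix.of fun i j => ∑ k, π (c (σ j) k) * π (pderivE (ρ i) (g k)))
      = fun j => ∑ k, π (c (σ j) k) • P k := by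
    funext j i
    simp [P, Finset.sum_apply, smul_eq_mul, Matrix.transpose_apply]
  have hdet : ∀ τ : Fin r → Fin b,
      Matrix.detRowAlternating (fun j => P (τ j)) = 0 := by
    intro τ
    have hmem : (Matrix.of fun i j => pderivE (ρ i) (g (τ j))).det ∈ K := by
      exact Ideal.mem_sup_right (Ideal.subset_span ⟨ρ, τ, rfl⟩)
    have : Matrix.detRowAlternating (fun j => P (τ j))
        = (Matrix.transpose ((Matrix.of fun i j => pderivE (ρ i) (g (τ j))).map π)).det := by
      rfl
    rw [this, Matrix.det_transpose, ← RingHom.mapMatrix_apply, ← RingHom.map_det,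
      Ideal.Quotient.eq_zero_iff_mem.mpr hmem]
  show Matrix.detRowAlternating _ = 0
  rw [harg]
  have hdet' : ∀ τ : Fin r → Fin b,
      Matrix.detRowAlternating (fun j => P (τ j)) = (0 : ↥(En n) ⧸ K) := fun τ => hdet τ
  exact det_lin_comb_zero (fun j k => π (c (σ j) k)) P hdet'


/-- The Jacobian extension `Δ_r(I)` of a finitely generated ideal `I` of
`E_n` does not depend on the choice of a finite family of generators: for two generating
families `f` and `g` of `I`, the ideal generated by `I` together with the `r × r` minors of
the Jacobian matrix of `f` equals the one obtained from `g`. -/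
theorem statement5 (n : ℕ) (hn : 1 ≤ n) (I : Ideal (En n)) (r : ℕ) (hr : 1 ≤ r)
    (a b : ℕ) (f : Fin a → En n) (g : Fin b → En n)
    (hfI : I = Ideal.span (Set.range f)) (hgI : I = Ideal.span (Set.range g)) :
    I ⊔ Ideal.span {φ : En n | ∃ (ρ : Fin r → Fin n) (σ : Fin r → Fin a),
        φ = (Matrix.of fun i j => pderivE (ρ i) (f (σ j))).det}
      = I ⊔ Ideal.span {φ : En n | ∃ (ρ : Fin r → Fin n) (σ : Fin r → Fin b),
        φ = (Matrix.of fun i j => pderivE (ρ i) (g (σ j))).det} := by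
  
  have hfmem : ∀ j, f j ∈ I := fun j => hfI ▸ Ideal.subset_span ⟨j, rfl⟩
  have hgmem : ∀ k, g k ∈ I := fun k => hgI ▸ Ideal.subset_span ⟨k, rfl⟩
  apply le_antisymm
  · exact sup_le le_sup_left
      (minor_span_le I f g (fun j => hgI ▸ hfmem j) hgmem)
  · exact sup_le le_sup_left
      (minor_span_le I g f (fun k => hfI ▸ hgmem k) hfmem)
end
end

section
/- Let f ∈ E_n be a germ with df(0) = 0 and let k ≥ 2 be an integer. Then the codimension of f exceeds k − 2 if and only if dim_ℝ(m_n/(J(f) + m_n^k)) > k − 2 (both dimensions taken in ℕ ∪ {∞}). -/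
open Filter Topology
open scoped ContDiff

set_option synthInstance.maxHeartbeats 400000

noncomputable section

namespace Statement6Aux

open MeasureTheory Set Metric

variable {n : ℕ}

lemma germValue_mul (a b : Filter.Germ (nhds (0 : Fin n → ℝ)) ℝ) :
    germValue (a * b) = germValue a * germValue b := by
  refine a.inductionOn fun f => b.inductionOn fun g => ?_
  rfl

lemma germValue_add (a b : Filter.Germ (nhds (0 : Fin n → ℝ)) ℝ) :
    germValue (a + b) = germValue a + germValue b := by
  refine a.inductionOn fun f => b.inductionOn fun g => ?_
  rfl

lemma germValue_one : germValue (1 : Filter.Germ (nhds (0 : Fin n → ℝ)) ℝ) = 1 := rfl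

lemma real_smul_mem (I : Ideal (En n)) (r : ℝ) {x : En n} (hx : x ∈ I) : r • x ∈ I := by
  rw [Algebra.smul_def]; exact I.mul_mem_left _ hx

/-- A germ in `E_n` whose value at `0` is nonzero is a unit. -/
lemma isUnit_of_germValue_ne_zero {φ : En n} (h : germValue (φ : Filter.Germ (nhds (0 : Fin n → ℝ)) ℝ) ≠ 0) :
    IsUnit φ := by
  obtain ⟨f, hf, hrep⟩ := φ.2
  have hf0 : f 0 ≠ 0 := by rwa [hrep, germValue_coe] at h
  have hU : IsOpen {x : Fin n → ℝ | f x ≠ 0} := by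
    have : {x : Fin n → ℝ | f x ≠ 0} = f ⁻¹' ({0}ᶜ) := rfl
    rw [this]
    exact isOpen_compl_singleton.preimage hf.continuous
  obtain ⟨ε, hε, hball⟩ := Metric.isOpen_iff.1 hU 0 hf0
  let χ : ContDiffBump (0 : Fin n → ℝ) := ⟨ε/3, ε/2, by positivity, by linarith⟩
  let g : (Fin n → ℝ) → ℝ := fun x => χ x * (f x)⁻¹
  have hg : ContDiff ℝ ∞ g := by
    rw [contDiff_iff_contDiffAt]
    intro x
    by_cases hx : x ∈ Metric.ball (0 : Fin n → ℝ) ε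
    · exact χ.contDiff.contDiffAt.mul (hf.contDiffAt.inv (hball hx))
    · have hmem : (Metric.closedBall (0 : Fin n → ℝ) (ε/2))ᶜ ∈ 𝓝 x := by
        refine Metric.isClosed_closedBall.isOpen_compl.mem_nhds ?_
        simp only [Set.mem_compl_iff, Metric.mem_closedBall, not_le]
        have : ¬ dist x 0 < ε := by simpa [Metric.mem_ball] using hx
        have := not_lt.1 this
        linarith
      have hev : (fun y => g y) =ᶠ[𝓝 x] (fun _ => (0:ℝ)) := by
        filter_upwards [hmem] with y hy
        have hy' : (ε/2 : ℝ) < dist y 0 := by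
          simpa only [Set.mem_compl_iff, Metric.mem_closedBall, not_le] using hy
        have : χ y = 0 := χ.zero_of_le_dist hy'.le
        simp [g, this]
      exact (contDiffAt_const (c := (0:ℝ))).congr_of_eventuallyEq hev
  refine isUnit_iff_exists_inv.2 ⟨germOf g hg, ?_⟩
  apply Subtype.ext
  have hcoe : ((φ * germOf g hg : En n) : Filter.Germ (nhds (0 : Fin n → ℝ)) ℝ)
      = (↑(fun x => f x * g x) : Filter.Germ (nhds (0 : Fin n → ℝ)) ℝ) := by
    have : ((φ * germOf g hg : En n) : Filter.Germ (nhds (0 : Fin n → ℝ)) ℝ)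
        = (φ : Filter.Germ (nhds (0 : Fin n → ℝ)) ℝ) * ↑g := rfl
    rw [this, hrep]
    rfl
  rw [hcoe]
  have hev : (fun x => f x * g x) =ᶠ[𝓝 (0 : Fin n → ℝ)] (fun _ => (1:ℝ)) := by
    filter_upwards [Metric.ball_mem_nhds (0 : Fin n → ℝ) (by positivity : (0:ℝ) < ε/3)] with y hy
    have hχ : χ y = 1 := χ.one_of_mem_closedBall (Metric.ball_subset_closedBall hy)
    have hfy : f y ≠ 0 := hball (Metric.ball_subset_ball (by linarith) hy)
    show f y * (χ y * (f y)⁻¹) = 1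
    rw [hχ, one_mul, mul_inv_cancel₀ hfy]
  exact Filter.Germ.coe_eq.2 hev

lemma mId_le_jacobson : mId n ≤ Ideal.jacobson (⊥ : Ideal (En n)) := by
  intro x hx
  rw [Ideal.mem_jacobson_bot]
  intro y
  apply isUnit_of_germValue_ne_zero
  have hxy : ((x * y + 1 : En n) : Filter.Germ (nhds (0 : Fin n → ℝ)) ℝ)
      = (x : Filter.Germ (nhds (0 : Fin n → ℝ)) ℝ) * (y : _) + 1 := rfl
  rw [hxy, germValue_add, germValue_mul, germValue_one, hx]
  norm_num

end Statement6Aux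
namespace Statement6Aux

lemma contDiff_pd {n : ℕ} {f : (Fin n → ℝ) → ℝ} (hf : ContDiff ℝ ∞ f) (i : Fin n) :
    ContDiff ℝ ∞ (pd i f) := by
  have h1 : ContDiff ℝ ∞ (fderiv ℝ f) := hf.fderiv_right (by simp)
  exact h1.clm_apply contDiff_const

lemma hadamard_rep {n : ℕ} {f : (Fin n → ℝ) → ℝ} (hf : ContDiff ℝ ∞ f) (h0 : f 0 = 0)
    (x : Fin n → ℝ) :
    f x = ∑ i, x i * ∫ t in (0:ℝ)..1, pd i f (t • x) := by
  have hdiff : ∀ t : ℝ, HasDerivAt (fun s : ℝ => f (s • x)) ((fderiv ℝ f (t • x)) x) t := by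
    intro t
    have h1 : HasFDerivAt f (fderiv ℝ f (t • x)) (t • x) :=
      ((hf.differentiable (by simp)) (t • x)).hasFDerivAt
    have h2 : HasDerivAt (fun s : ℝ => s • x) x t := by
      simpa using (hasDerivAt_id t).smul_const x
    exact h1.comp_hasDerivAt t h2
  have hcont : Continuous fun t : ℝ => (fderiv ℝ f (t • x)) x := by
    have h1 : ContDiff ℝ ∞ (fderiv ℝ f) := hf.fderiv_right (by simp)
    exact ((h1.comp ((contDiff_id (E := ℝ)).smul contDiff_const)).clm_apply contDiff_const).continuous
  have ftc := intervalIntegral.integral_eq_sub_of_hasDerivAt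
    (f := fun s : ℝ => f (s • x)) (f' := fun t => (fderiv ℝ f (t • x)) x)
    (fun t _ => hdiff t) (hcont.intervalIntegrable 0 1)
  have expand : ∀ y : Fin n → ℝ, (fderiv ℝ f y) x = ∑ i, x i * pd i f y := by
    intro y
    conv_lhs => rw [pi_eq_sum_univ x, map_sum]
    refine Finset.sum_congr rfl fun i _ => ?_
    have hsingle : (fun j => if i = j then (1:ℝ) else 0) = Pi.single i 1 := by
      funext j; simp [Pi.single_apply, eq_comm]
    rw [map_smul, hsingle]
    simp [pd, smul_eq_mul]
  have hint : ∀ i : Fin n, IntervalIntegrable (fun t : ℝ => x i * pd i f (t • x))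
      MeasureTheory.volume 0 1 := by
    intro i
    have hc : Continuous fun t : ℝ => pd i f (t • x) :=
      (contDiff_pd hf i).continuous.comp
        ((continuous_id : Continuous fun t : ℝ => t).smul continuous_const)
    exact (continuous_const.mul hc).intervalIntegrable 0 1
  calc f x = f ((1:ℝ) • x) - f ((0:ℝ) • x) := by simp [h0]
    _ = ∫ t in (0:ℝ)..1, (fderiv ℝ f (t • x)) x := ftc.symm
    _ = ∫ t in (0:ℝ)..1, ∑ i, x i * pd i f (t • x) := by
        refine intervalIntegral.integral_congr fun t _ => ?_
        exact expand (t • x)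
    _ = ∑ i, ∫ t in (0:ℝ)..1, x i * pd i f (t • x) :=
        intervalIntegral.integral_finset_sum (fun i _ => hint i)
    _ = ∑ i, x i * ∫ t in (0:ℝ)..1, pd i f (t • x) := by
        simp [intervalIntegral.integral_const_mul]

end Statement6Aux
namespace Statement6Aux

open MeasureTheory Set

lemma contDiff_hadamard_g {n : ℕ} {f : (Fin n → ℝ) → ℝ} (hf : ContDiff ℝ ∞ f) (i : Fin n) :
    ContDiff ℝ ∞ (fun x : Fin n → ℝ => ∫ t in (0:ℝ)..1, pd i f (t • x)) := by
  classical
  let χ : ContDiffBump (-(1/2) : ℝ) := ⟨1, 2, one_pos, one_lt_two⟩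
  let g : (Fin n → ℝ) → ℝ → ℝ := fun p s => χ s * pd i f ((-s) • p)
  let f₀ : ℝ → ℝ := Set.indicator (Set.Ioc (0:ℝ) 1) 1
  have hf₀ : LocallyIntegrable f₀ volume := by
    refine Integrable.locallyIntegrable ?_
    rw [integrable_indicator_iff measurableSet_Ioc]
    exact integrableOn_const measure_Ioc_lt_top.ne
  have hgs : ∀ p s, p ∈ (univ : Set (Fin n → ℝ)) → s ∉ Metric.closedBall (-(1/2) : ℝ) 2 →
      g p s = 0 := by
    intro p s _ hs
    have hs' : (2:ℝ) ≤ dist s (-(1/2)) := by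
      simpa only [Metric.mem_closedBall, not_le] using (le_of_lt (by
        simpa only [Metric.mem_closedBall, not_le] using hs))
    have : χ s = 0 := χ.zero_of_le_dist hs'
    simp [g, this]
  have hpd : ContDiff ℝ ∞ (pd i f) := contDiff_pd hf i
  have hg : ContDiffOn ℝ ∞ (Function.uncurry g) (univ ×ˢ univ) := by
    refine ContDiff.contDiffOn ?_
    have h1 : ContDiff ℝ ∞ fun q : (Fin n → ℝ) × ℝ => χ q.2 :=
      χ.contDiff.comp contDiff_snd
    have h2 : ContDiff ℝ ∞ fun q : (Fin n → ℝ) × ℝ => pd i f ((-q.2) • q.1) :=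
      hpd.comp ((contDiff_snd.neg).smul contDiff_fst)
    exact h1.mul h2
  have hconv := contDiffOn_convolution_right_with_param_comp
    (L := ContinuousLinearMap.mul ℝ ℝ) (μ := volume)
    (v := fun _ : Fin n → ℝ => (0:ℝ)) contDiffOn_const
    isOpen_univ (isCompact_closedBall (-(1/2):ℝ) 2) hgs hf₀ hg
  rw [contDiffOn_univ] at hconv
  have heq : (fun x : Fin n → ℝ => (convolution f₀ (g x) (ContinuousLinearMap.mul ℝ ℝ) volume) 0)
      = fun x : Fin n → ℝ => ∫ t in (0:ℝ)..1, pd i f (t • x) := by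
    funext p
    have h1 : (fun t : ℝ => (ContinuousLinearMap.mul ℝ ℝ) (f₀ t) (g p (0 - t)))
        = Set.indicator (Set.Ioc (0:ℝ) 1) (fun t => g p (-t)) := by
      funext t
      by_cases ht : t ∈ Set.Ioc (0:ℝ) 1
      · simp [f₀, Set.indicator_of_mem ht]
      · simp [f₀, Set.indicator_of_notMem ht]
    rw [convolution, h1, integral_indicator measurableSet_Ioc]
    rw [intervalIntegral.integral_of_le (zero_le_one)]
    refine setIntegral_congr_fun measurableSet_Ioc fun t ht => ?_
    have hχ : χ (-t) = 1 := by
      refine χ.one_of_mem_closedBall ?_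
      rw [Metric.mem_closedBall, Real.dist_eq]
      obtain ⟨ht0, ht1⟩ := ht
      rw [abs_le]
      constructor <;> simp <;> linarith
    show χ (-t) * pd i f ((-(-t)) • p) = pd i f (t • p)
    rw [hχ, neg_neg, one_mul]
  rw [heq] at hconv
  exact hconv

end Statement6Aux
namespace Statement6Aux

lemma contDiff_coord {n : ℕ} (i : Fin n) : ContDiff ℝ ∞ (fun x : Fin n → ℝ => x i) :=
  (ContinuousLinearMap.proj (R := ℝ) (φ := fun _ : Fin n => ℝ) i).contDiff

/-- Hadamard's lemma: the maximal ideal is generated by the coordinate germs. -/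
lemma mId_eq_span (n : ℕ) :
    mId n = Ideal.span (Set.range fun i : Fin n => germOf (fun x => x i) (contDiff_coord i)) := by
  apply le_antisymm
  · intro φ hφ
    obtain ⟨f, hf, hrep⟩ := φ.2
    have h0 : f 0 = 0 := by
      have : germValue (φ : Filter.Germ (nhds (0 : Fin n → ℝ)) ℝ) = 0 := hφ
      rwa [hrep, germValue_coe] at this
    have hφeq : φ = ∑ i, germOf (fun x => x i) (contDiff_coord i) *
        germOf (fun x => ∫ t in (0:ℝ)..1, pd i f (t • x)) (contDiff_hadamard_g hf i) := by
      apply Subtype.ext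
      have hval : ((∑ i, germOf (fun x => x i) (contDiff_coord i) *
          germOf (fun x => ∫ t in (0:ℝ)..1, pd i f (t • x)) (contDiff_hadamard_g hf i) :
          En n) : Filter.Germ (nhds (0 : Fin n → ℝ)) ℝ)
          = ∑ i, (↑(fun x => x i * ∫ t in (0:ℝ)..1, pd i f (t • x)) :
            Filter.Germ (nhds (0 : Fin n → ℝ)) ℝ) := by
        rw [AddSubmonoidClass.coe_finset_sum]
        exact Finset.sum_congr rfl fun i _ => rfl
      rw [hval, hrep]
      have : (∑ i, (↑(fun x => x i * ∫ t in (0:ℝ)..1, pd i f (t • x)) :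
          Filter.Germ (nhds (0 : Fin n → ℝ)) ℝ))
          = ↑(∑ i : Fin n, fun x => x i * ∫ t in (0:ℝ)..1, pd i f (t • x)) :=
        (map_sum (Filter.Germ.coeRingHom (nhds (0 : Fin n → ℝ))) _ _).symm
      rw [this]
      congr 1
      funext x
      rw [Finset.sum_apply]
      exact hadamard_rep hf h0 x
    rw [hφeq]
    refine Submodule.sum_mem _ fun i _ => ?_
    exact Ideal.mul_mem_right _ _ (Ideal.subset_span ⟨i, rfl⟩)
  · rw [Ideal.span_le]
    rintro _ ⟨i, rfl⟩
    show germValue ((germOf (fun x : Fin n → ℝ => x i) (contDiff_coord i) : En n) :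
      Filter.Germ (nhds (0 : Fin n → ℝ)) ℝ) = 0
    rfl

lemma mId_fg (n : ℕ) : (mId n).FG := by
  rw [mId_eq_span]
  exact Submodule.fg_span (Set.finite_range _)

lemma JId_le_mId {n : ℕ} {f : (Fin n → ℝ) → ℝ} (hdf : fderiv ℝ f 0 = 0) :
    JId n f ≤ mId n := by
  rw [JId, gSpan, Ideal.span_le]
  rintro φ ⟨g, ⟨i, rfl⟩, hφ⟩
  show germValue _ = 0
  rw [hφ, germValue_coe]
  show fderiv ℝ f 0 (Pi.single i 1) = 0
  rw [hdf]
  rfl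

end Statement6Aux
namespace Statement6Aux

lemma quotDim_anti {n : ℕ} {J J' : Ideal (En n)} (h : J ≤ J') :
    quotDim n J' ≤ quotDim n J := by
  set N1 := Submodule.comap (mId n).subtype (J : Submodule (En n) (En n)) with hN1
  set N2 := Submodule.comap (mId n).subtype (J' : Submodule (En n) (En n)) with hN2
  have h12 : N1 ≤ Submodule.comap LinearMap.id N2 := Submodule.comap_mono h
  let F : (↥(mId n) ⧸ N1) →ₗ[En n] (↥(mId n) ⧸ N2) := Submodule.mapQ N1 N2 LinearMap.id h12
  have hsurj : Function.Surjective F := by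
    intro x
    obtain ⟨y, rfl⟩ := Submodule.Quotient.mk_surjective N2 x
    exact ⟨Submodule.Quotient.mk y, by simp [F, Submodule.mapQ_apply]⟩
  exact LinearMap.rank_le_of_surjective (F.restrictScalars ℝ) hsurj

set_option maxHeartbeats 2000000 in
/-- The key Nakayama-type lemma: if `dim(m/(J(f)+mᵏ)) ≤ k - 2` then `mᵏ ⊆ J(f)`. -/
lemma key_lemma (n k : ℕ) (hk : 2 ≤ k) (f : (Fin n → ℝ) → ℝ)
    (hdf : fderiv ℝ f 0 = 0)
    (hq : quotDim n (JId n f ⊔ (mId n) ^ k) + 2 ≤ (k : Cardinal)) :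
    JId n f ⊔ (mId n) ^ k = JId n f := by
  classical
  set m : Ideal (En n) := mId n with hm
  set J : Ideal (En n) := JId n f with hJ
  set K : Ideal (En n) := J ⊔ m ^ k with hK
  have hJm : J ≤ m := JId_le_mId hdf
  have hKm : K ≤ m := sup_le hJm (Ideal.pow_le_self (by omega))
  -- Step 1: some step in the filtration collapses
  have hC : ∃ j : ℕ, 1 ≤ j ∧ j + 1 ≤ k ∧ m ^ j ⊔ K ≤ m ^ (j + 1) ⊔ K := by
    by_contra hcon
    push_neg at hcon
    have hstrict : ∀ j : ℕ, 1 ≤ j → j + 1 ≤ k →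
        ∃ x, x ∈ m ^ j ⊔ K ∧ x ∉ m ^ (j + 1) ⊔ K := by
      intro j h1 h2
      have hne := hcon j h1 h2
      exact SetLike.not_le_iff_exists.1 hne
    have hkk : ∀ i : Fin (k - 1), (i : ℕ) + 1 + 1 ≤ k := fun i => by omega
    choose e he1 he2 using fun i : Fin (k - 1) =>
      hstrict ((i : ℕ) + 1) (by omega) (hkk i)
    have hem : ∀ i, e i ∈ m := fun i =>
      (sup_le (Ideal.pow_le_self (by omega)) hKm) (he1 i)
    set N := Submodule.comap (mId n).subtype (K : Submodule (En n) (En n)) with hN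
    let v : Fin (k - 1) → (↥(mId n) ⧸ N) := fun i => Submodule.Quotient.mk ⟨e i, hem i⟩
    have hli : LinearIndependent ℝ v := by
      rw [Fintype.linearIndependent_iff]
      intro a ha
      by_contra hcon2
      push_neg at hcon2
      obtain ⟨i1, hi1⟩ := hcon2
      set s : Finset (Fin (k - 1)) := Finset.univ.filter (fun i => a i ≠ 0) with hs
      have hsne : s.Nonempty := ⟨i1, by simp [hs, hi1]⟩
      set i0 := s.min' hsne with hi0
      have hi0mem : a i0 ≠ 0 := by
        have := s.min'_mem hsne
        simpa [hs] using this
      have hi0min : ∀ i, a i ≠ 0 → i0 ≤ i := fun i hi =>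
        s.min'_le i (by simp [hs, hi])
      -- the sum is in K
      have hsum0 : Submodule.mkQ N (∑ i, a i • (⟨e i, hem i⟩ : ↥(mId n))) = 0 := by
        rw [map_sum]
        have : ∀ i, Submodule.mkQ N (a i • (⟨e i, hem i⟩ : ↥(mId n))) = a i • v i := by
          intro i
          rw [Submodule.mkQ_apply, Submodule.Quotient.mk_smul]
        simp_rw [this]
        exact ha
      have hsumN : (∑ i, a i • (⟨e i, hem i⟩ : ↥(mId n))) ∈ N := by
        rwa [← Submodule.Quotient.mk_eq_zero, ← Submodule.mkQ_apply]
      have hsumK : (∑ i, a i • e i) ∈ K := by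
        have h2 := Submodule.mem_comap.1 hsumN
        simp only [Submodule.subtype_apply, AddSubmonoidClass.coe_finset_sum,
          Submodule.coe_smul_of_tower] at h2
        exact h2
      set C2 : Ideal (En n) := m ^ ((i0 : ℕ) + 1 + 1) ⊔ K with hC2
      have hterm : ∀ i, i ≠ i0 → a i • e i ∈ C2 := by
        intro i hi
        rcases lt_or_gt_of_ne hi with hlt | hgt
        · have hz : a i = 0 := by
            by_contra hz
            exact absurd (hi0min i hz) (not_le.2 hlt)
          rw [hz, zero_smul]
          exact Submodule.zero_mem _
        · have h1 : e i ∈ m ^ ((i : ℕ) + 1) ⊔ K := he1 i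
          have h2 : m ^ ((i : ℕ) + 1) ⊔ K ≤ C2 :=
            sup_le_sup_right (Ideal.pow_le_pow_right (by
              have : (i0 : ℕ) < (i : ℕ) := hgt
              omega)) K
          exact real_smul_mem _ _ (h2 h1)
      have hsmul : a i0 • e i0 ∈ C2 := by
        have hsplit : (∑ i, a i • e i) - (∑ i ∈ Finset.univ.erase i0, a i • e i)
            = a i0 • e i0 := by
          rw [Finset.sum_erase_eq_sub (Finset.mem_univ i0), sub_sub_cancel]
        rw [← hsplit]
        refine Submodule.sub_mem _ (le_sup_right (α := Ideal (En n)) hsumK) ?_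
        exact Submodule.sum_mem _ fun i hi => hterm i (Finset.ne_of_mem_erase hi)
      have he : e i0 ∈ C2 := by
        have h3 : e i0 = (a i0)⁻¹ • (a i0 • e i0) := by
          rw [smul_smul, inv_mul_cancel₀ hi0mem, one_smul]
        rw [h3]
        exact real_smul_mem _ _ hsmul
      exact he2 i0 he
    have hcard : ((k - 1 : ℕ) : Cardinal) ≤ Module.rank ℝ (↥(mId n) ⧸ N) := by
      have := hli.cardinal_le_rank
      simpa using this
    have hqd : quotDim n K = Module.rank ℝ (↥(mId n) ⧸ N) := rfl
    have hbad : ((k - 1 : ℕ) : Cardinal) + 2 ≤ (k : Cardinal) := by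
      refine le_trans (add_le_add_left ?_ 2) hq
      rw [hqd]
      exact hcard
    have : ((k + 1 : ℕ) : Cardinal) ≤ ((k : ℕ) : Cardinal) := by
      have hnat : ((k - 1 : ℕ) : Cardinal) + 2 = ((k + 1 : ℕ) : Cardinal) := by
        have : (k - 1) + 2 = k + 1 := by omega
        rw [← this]
        push_cast
        ring
      rwa [hnat] at hbad
    have : k + 1 ≤ k := by exact_mod_cast this
    omega
  obtain ⟨j, hj1, hjk, hle⟩ := hC
  have step : m ^ j ≤ J ⊔ m • m ^ j := by
    have h1 : m ^ j ≤ m ^ (j + 1) ⊔ K := le_trans le_sup_left hle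
    have h2 : m ^ k ≤ m ^ (j + 1) := Ideal.pow_le_pow_right hjk
    have h3 : m ^ (j + 1) ⊔ K ≤ m ^ (j + 1) ⊔ J :=
      sup_le le_sup_left (sup_le le_sup_right (le_trans h2 le_sup_left))
    have h4 : m • m ^ j = m ^ (j + 1) := by
      rw [smul_eq_mul, ← pow_succ']
    rw [h4, sup_comm]
    exact le_trans h1 h3
  have hmj : m ^ j ≤ J :=
    Submodule.le_of_le_smul_of_le_jacobson_bot (Submodule.FG.pow (mId_fg n) j) mId_le_jacobson step
  have hmk : m ^ k ≤ J := le_trans (Ideal.pow_le_pow_right (by omega)) hmj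
  exact sup_eq_left.2 hmk

end Statement6Aux
/-- For a germ `f` with `df(0) = 0` and `k ≥ 2`: the codimension of `f`
exceeds `k - 2` iff `dim_ℝ(m_n/(J(f) + m_nᵏ)) > k - 2`. (An inequality `c > k - 2` of
extended naturals is encoded as `k < c + 2`.) -/
theorem statement6 (n k : ℕ) (hn : 1 ≤ n) (hk : 2 ≤ k)
    (f : (Fin n → ℝ) → ℝ) (hf : ContDiff ℝ ∞ f) (hdf : fderiv ℝ f 0 = 0) :
    ((k : Cardinal) < codim n f + 2) ↔
      ((k : Cardinal) < quotDim n (JId n f ⊔ (mId n) ^ k) + 2) := by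
  constructor
  · intro h
    by_contra h'
    push_neg at h'
    have heq := Statement6Aux.key_lemma n k hk f hdf h'
    rw [heq] at h'
    have : ¬ ((k : Cardinal) < codim n f + 2) := not_lt.2 h'
    exact this h
  · intro h
    have hle : quotDim n (JId n f ⊔ (mId n) ^ k) ≤ codim n f :=
      Statement6Aux.quotDim_anti le_sup_left
    calc (k : Cardinal) < quotDim n (JId n f ⊔ (mId n) ^ k) + 2 := h
      _ ≤ codim n f + 2 := add_le_add_left hle 2
end
end

section
/- Fix integers n ≥ 1 and k ≥ 1. The ideal of E_n generated by the germs of the monomials x_1^k, …, x_n^k contains the ideal m_n^{n(k−1)+1}. Consequently, the Jacobian ideal of the germ r = x_1^{k+1} + … + x_n^{k+1} equals the ideal generated by x_1^k, …, x_n^k, and the codimension of r is at most a_k := dim_ℝ(m_n/m_n^{n(k−1)+1}), which is finite. -/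
open Filter Topology
open scoped ContDiff

set_option synthInstance.maxHeartbeats 400000

noncomputable section

open MeasureTheory Metric

universe u

lemma uncurry_fderiv_smooth {E : Type*} [NormedAddCommGroup E] [NormedSpace ℝ E]
    {V : Type*} [NormedAddCommGroup V] [NormedSpace ℝ V]
    {F : E → ℝ → V} (hF : ContDiff ℝ ∞ (Function.uncurry F)) :
    ContDiff ℝ ∞ (Function.uncurry (fun x t => fderiv ℝ (fun y => F y t) x)) := by
  have hd : Differentiable ℝ (Function.uncurry F) :=
    hF.differentiable (by simp)
  have hslice : ∀ p : E × ℝ, HasFDerivAt (fun y => F y p.2)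
      ((fderiv ℝ (Function.uncurry F) p).comp (ContinuousLinearMap.inl ℝ E ℝ)) p.1 := by
    intro p
    exact ((hd (p.1, p.2)).hasFDerivAt).comp p.1 (hasFDerivAt_prodMk_left (𝕜 := ℝ) p.1 p.2)
  have heq : (Function.uncurry (fun x t => fderiv ℝ (fun y => F y t) x)) =
      fun p : E × ℝ => (fderiv ℝ (Function.uncurry F) p).comp (ContinuousLinearMap.inl ℝ E ℝ) := by
    funext p
    exact (hslice p).fderiv
  rw [heq]
  have h1 : ContDiff ℝ ∞ (fun p : E × ℝ => fderiv ℝ (Function.uncurry F) p) :=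
    hF.fderiv_right (by simp)
  exact h1.clm_comp contDiff_const

lemma contDiff_param_integral {n : ℕ} (m : ℕ) :
    ∀ {V : Type u} [NormedAddCommGroup V] [NormedSpace ℝ V] [CompleteSpace V]
      {F : (Fin n → ℝ) → ℝ → V}, ContDiff ℝ ∞ (Function.uncurry F) →
      ContDiff ℝ (m : WithTop ℕ∞) (fun x => ∫ t in (0:ℝ)..1, F x t) := by
  induction m with
  | zero =>
    intro V _ _ _ F hF
    rw [Nat.cast_zero, contDiff_zero]
    exact intervalIntegral.continuous_parametric_intervalIntegral_of_continuous' hF.continuous 0 1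
  | succ m ih =>
    intro V _ _ _ F hF
    have hc : ∀ x, Continuous (F x) := fun x =>
      hF.continuous.comp (continuous_const.prodMk continuous_id)
    set F' : (Fin n → ℝ) → ℝ → ((Fin n → ℝ) →L[ℝ] V) := fun x t => fderiv ℝ (fun y => F y t) x
      with hF'def
    have hF' : ContDiff ℝ ∞ (Function.uncurry F') := uncurry_fderiv_smooth hF
    have hd : Differentiable ℝ (Function.uncurry F) :=
      hF.differentiable (by simp)
    have hdiff : ∀ (x : Fin n → ℝ) (t : ℝ), HasFDerivAt (fun y => F y t) (F' x t) x := by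
      intro x t
      have h1 : HasFDerivAt (fun y => F y t)
          ((fderiv ℝ (Function.uncurry F) (x, t)).comp
            (ContinuousLinearMap.inl ℝ (Fin n → ℝ) ℝ)) x :=
        by exact ((hd (x, t)).hasFDerivAt).comp x (hasFDerivAt_prodMk_left (𝕜 := ℝ) x t)
      exact h1.differentiableAt.hasFDerivAt
    have key : ∀ x₀, HasFDerivAt (fun x => ∫ t in (0:ℝ)..1, F x t)
        (∫ t in (0:ℝ)..1, F' x₀ t) x₀ := by
      intro x₀
      obtain ⟨C, hC⟩ : ∃ C, ∀ p ∈ (closedBall x₀ 1) ×ˢ (Set.uIcc (0:ℝ) 1),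
          ‖Function.uncurry F' p‖ ≤ C :=
        ((isCompact_closedBall x₀ 1).prod isCompact_uIcc).exists_bound_of_continuousOn
          hF'.continuous.continuousOn
      apply intervalIntegral.hasFDerivAt_integral_of_dominated_of_fderiv_le
        (bound := fun _ => C) (s := ball x₀ 1) (ball_mem_nhds x₀ one_pos)
      · exact Eventually.of_forall fun x => (hc x).aestronglyMeasurable
      · exact (hc x₀).intervalIntegrable 0 1
      · exact (hF'.continuous.comp (continuous_const.prodMk continuous_id)).aestronglyMeasurable
      · refine Eventually.of_forall fun t ht x hx => ?_
        exact hC (x, t) ⟨ball_subset_closedBall hx, Set.uIoc_subset_uIcc ht⟩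
      · exact intervalIntegrable_const
      · exact Eventually.of_forall fun t _ x _ => hdiff x t
    have hfd : (fderiv ℝ fun x => ∫ t in (0:ℝ)..1, F x t) =
        fun x => ∫ t in (0:ℝ)..1, F' x t := funext fun x => (key x).fderiv
    rw [show ((m + 1 : ℕ) : WithTop ℕ∞) = (m : WithTop ℕ∞) + 1 by exact_mod_cast rfl,
      contDiff_succ_iff_fderiv]
    refine ⟨fun x => (key x).differentiableAt, ?_, ?_⟩
    · intro h; exact absurd h (by exact_mod_cast (WithTop.natCast_ne_top m))
    · rw [hfd]; exact ih hF'

lemma contDiff_param_integral' {n : ℕ} {V : Type u} [NormedAddCommGroup V] [NormedSpace ℝ V]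
    [CompleteSpace V] {F : (Fin n → ℝ) → ℝ → V} (hF : ContDiff ℝ ∞ (Function.uncurry F)) :
    ContDiff ℝ ∞ (fun x => ∫ t in (0:ℝ)..1, F x t) :=
  contDiff_infty.2 fun m => contDiff_param_integral m hF

lemma hadamard {n : ℕ} {g : (Fin n → ℝ) → ℝ} (hg : ContDiff ℝ ∞ g) (h0 : g 0 = 0) :
    ∃ h : Fin n → ((Fin n → ℝ) → ℝ), (∀ i, ContDiff ℝ ∞ (h i)) ∧
      ∀ x, g x = ∑ i, x i * h i x := by
  have hd : Differentiable ℝ g := hg.differentiable (by simp)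
  refine ⟨fun i x => ∫ t in (0:ℝ)..1, fderiv ℝ g (t • x) (Pi.single i 1), ?_, ?_⟩
  · intro i
    apply contDiff_param_integral' (F := fun x t => fderiv ℝ g (t • x) (Pi.single i 1))
    have h1 : ContDiff ℝ ∞ (fun p : (Fin n → ℝ) × ℝ => fderiv ℝ g (p.2 • p.1)) := by
      apply (hg.fderiv_right (by simp)).comp
      exact (contDiff_snd.smul contDiff_fst)
    exact h1.clm_apply contDiff_const
  · intro x
    have hline : ∀ t : ℝ, HasDerivAt (fun s : ℝ => g (s • x)) (fderiv ℝ g (t • x) x) t := by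
      intro t
      have h2 : HasDerivAt (fun s : ℝ => s • x) x t := by
        simpa using (hasDerivAt_id t).smul_const x
      exact (hd (t • x)).hasFDerivAt.comp_hasDerivAt t h2
    have hcont : Continuous fun t : ℝ => fderiv ℝ g (t • x) x := by
      have := (hg.continuous_fderiv (by simp))
      exact ((this.comp (continuous_id.smul continuous_const)).clm_apply continuous_const)
    have hftc : ∫ t in (0:ℝ)..1, fderiv ℝ g (t • x) x = g ((1:ℝ) • x) - g ((0:ℝ) • x) := by
      apply intervalIntegral.integral_eq_sub_of_hasDerivAt (f := fun s : ℝ => g (s • x))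
      · intro t _
        exact hline t
      · exact (hcont.intervalIntegrable 0 1)
    have hx : ∀ t : ℝ, fderiv ℝ g (t • x) x = ∑ i, x i * fderiv ℝ g (t • x) (Pi.single i 1) := by
      intro t
      have hxsum : x = ∑ i, x i • (Pi.single i 1 : Fin n → ℝ) := by
        funext j
        simp [Finset.sum_apply, Pi.single_apply]
      rw [show fderiv ℝ g (t • x) x
          = fderiv ℝ g (t • x) (∑ i, x i • (Pi.single i 1 : Fin n → ℝ)) from by rw [← hxsum],
        map_sum]
      simp [smul_eq_mul]
    simp only [one_smul, zero_smul, h0, sub_zero] at hftc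
    rw [← hftc]
    rw [show (fun t : ℝ => fderiv ℝ g (t • x) x) = fun t => ∑ i, x i * fderiv ℝ g (t • x) (Pi.single i 1) from funext hx] at hftc ⊢
    rw [intervalIntegral.integral_finset_sum]
    · congr 1
      funext i
      rw [intervalIntegral.integral_const_mul]
    · intro i _
      have : Continuous fun t : ℝ => fderiv ℝ g (t • x) (Pi.single i 1) := by
        have := (hg.continuous_fderiv (by simp))
        exact ((this.comp (continuous_id.smul continuous_const)).clm_apply continuous_const)
      exact (continuous_const.mul this).intervalIntegrable 0 1


-- ## Germ and En infrastructure

lemma germValue_add {n : ℕ} (φ ψ : Filter.Germ (nhds (0 : Fin n → ℝ)) ℝ) :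
    germValue (φ + ψ) = germValue φ + germValue ψ := by
  induction φ using Filter.Germ.inductionOn with | _ f =>
  induction ψ using Filter.Germ.inductionOn with | _ g =>
  rw [← Filter.Germ.coe_add]
  rfl

lemma germValue_sub {n : ℕ} (φ ψ : Filter.Germ (nhds (0 : Fin n → ℝ)) ℝ) :
    germValue (φ - ψ) = germValue φ - germValue ψ := by
  induction φ using Filter.Germ.inductionOn with | _ f =>
  induction ψ using Filter.Germ.inductionOn with | _ g =>
  rw [← Filter.Germ.coe_sub]
  simp [germValue]
  rfl

lemma contDiff_coord {n : ℕ} (i : Fin n) : ContDiff ℝ ∞ (fun x : Fin n → ℝ => x i) :=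
  (ContinuousLinearMap.proj i : (Fin n → ℝ) →L[ℝ] ℝ).contDiff

/-- The germ of the `i`-th coordinate. -/
def XiE (n : ℕ) (i : Fin n) : En n := germOf (fun x : Fin n → ℝ => x i) (contDiff_coord i)

/-- The germ of `x_i ^ k`. -/
def XkE (n : ℕ) (k : ℕ) (i : Fin n) : En n :=
  germOf (fun x : Fin n → ℝ => x i ^ k) ((contDiff_coord i).pow k)

lemma XiE_mem_mId {n : ℕ} (i : Fin n) : XiE n i ∈ mId n := by
  show germValue _ = 0
  simp [XiE, germOf]

lemma germOf_mem_mId {n : ℕ} {f : (Fin n → ℝ) → ℝ} (hf : ContDiff ℝ ∞ f) (h0 : f 0 = 0) :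
    germOf f hf ∈ mId n := by
  show germValue _ = 0
  simpa [germOf] using h0

lemma germOf_mul {n : ℕ} {f g : (Fin n → ℝ) → ℝ} (hf : ContDiff ℝ ∞ f) (hg : ContDiff ℝ ∞ g) :
    germOf f hf * germOf g hg = germOf (f * g) (hf.mul hg) := by
  apply Subtype.ext
  exact (Filter.Germ.coe_mul f g).symm

lemma XiE_pow {n : ℕ} (i : Fin n) (k : ℕ) : XiE n i ^ k = XkE n k i := by
  apply Subtype.ext
  rw [SubmonoidClass.coe_pow]
  exact (Filter.Germ.coe_pow (fun x : Fin n → ℝ => x i) k).symm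

-- ## Hadamard: `m ≤ (x_1, …, x_n)`
open scoped Pointwise

lemma mId_le_span_coord {n : ℕ} : mId n ≤ Ideal.span (Set.range (XiE n)) := by
  rintro ⟨φ, f, hf, rfl⟩ hφ
  have h0 : f 0 = 0 := by exact hφ
  obtain ⟨h, hsm, hrep⟩ := hadamard hf h0
  have hfun : f = ∑ i : Fin n, (fun x : Fin n → ℝ => x i) * h i := by
    funext x
    simpa [Finset.sum_apply] using hrep x
  have hcomm : ∀ i, germOf (h i) (hsm i) * XiE n i
      = germOf ((fun x : Fin n → ℝ => x i) * h i) ((contDiff_coord i).mul (hsm i)) := by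
    intro i
    apply Subtype.ext
    show ((↑(h i) * ↑(fun x : Fin n → ℝ => x i)) : Filter.Germ (nhds (0 : Fin n → ℝ)) ℝ) = _
    rw [← Filter.Germ.coe_mul]
    exact congrArg _ (mul_comm _ _)
  have hEn : (⟨↑f, f, hf, rfl⟩ : En n)
      = ∑ i : Fin n, germOf (h i) (hsm i) * XiE n i := by
    apply Subtype.ext
    rw [AddSubmonoidClass.coe_finset_sum]
    simp_rw [hcomm]
    show (↑f : Filter.Germ (nhds (0 : Fin n → ℝ)) ℝ) = _
    rw [hfun, ← Filter.Germ.coe_coeRingHom, map_sum]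
    rfl
  rw [hEn]
  exact Ideal.sum_mem _ fun i _ =>
    Ideal.mul_mem_left _ _ (Ideal.subset_span ⟨i, rfl⟩)

/-- Products of `N` coordinate germs. -/
def PrSet (n N : ℕ) : Set (En n) :=
  Set.range (fun c : Fin N → Fin n => ∏ j, XiE n (c j))

lemma prod_mem_pow {R : Type*} [CommRing R] (I : Ideal R) :
    ∀ (N : ℕ) (u : Fin N → R), (∀ j, u j ∈ I) → ∏ j, u j ∈ I ^ N := by
  intro N
  induction N with
  | zero => intro u _; simpa using Submodule.mem_top
  | succ N ih =>
    intro u hu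
    rw [Fin.prod_univ_succ, mul_comm, pow_succ]
    exact Ideal.mul_mem_mul (ih _ fun j => hu _) (hu 0)

lemma PrSet_subset_pow {n N : ℕ} {φ : En n} (hφ : φ ∈ PrSet n N) : φ ∈ (mId n) ^ N := by
  obtain ⟨c, rfl⟩ := hφ
  exact prod_mem_pow _ _ _ fun j => XiE_mem_mId (c j)

lemma prodSpan {n : ℕ} : ∀ N : ℕ, ((mId n) ^ (N + 1) : Ideal (En n)) ≤ Ideal.span (PrSet n (N + 1)) := by
  intro N
  induction N with
  | zero =>
    rw [pow_one]
    refine le_trans mId_le_span_coord (Ideal.span_mono ?_)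
    rintro φ ⟨i, rfl⟩
    exact ⟨fun _ => i, by simp⟩
  | succ N ih =>
    rw [pow_succ]
    calc (mId n) ^ (N + 1) * mId n
        ≤ Ideal.span (PrSet n (N + 1)) * Ideal.span (Set.range (XiE n)) :=
          Ideal.mul_mono ih mId_le_span_coord
      _ = Ideal.span (PrSet n (N + 1) * Set.range (XiE n)) := Ideal.span_mul_span' _ _
      _ ≤ Ideal.span (PrSet n (N + 2)) := Ideal.span_mono (by
          rw [Set.mul_subset_iff]
          rintro _ ⟨c, rfl⟩ _ ⟨i, rfl⟩
          refine ⟨Fin.snoc c i, ?_⟩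
          show (∏ j : Fin (N + 2), XiE n ((Fin.snoc c i : Fin (N + 2) → Fin n) j))
              = (∏ j : Fin (N + 1), XiE n (c j)) * XiE n i
          rw [Fin.prod_univ_castSucc]
          simp [Fin.snoc_castSucc, Fin.snoc_last])

-- ## Pigeonhole: products of many coordinates land in `(x_1^k, …, x_n^k)`

lemma XkE_mem_gSpan_gen {n k : ℕ} (i : Fin n) :
    XkE n k i ∈ {φ : En n | ∃ f ∈ Set.range (fun i : Fin n => fun x : Fin n → ℝ => x i ^ k),
      (φ : Filter.Germ (nhds (0 : Fin n → ℝ)) ℝ) = ↑f} :=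
  ⟨fun x => x i ^ k, ⟨i, rfl⟩, rfl⟩

lemma span_XkE_le_gSpan {n k : ℕ} :
    Ideal.span (Set.range (XkE n k))
      ≤ gSpan n (Set.range fun i : Fin n => fun x : Fin n → ℝ => x i ^ k) := by
  rw [Ideal.span_le]
  rintro _ ⟨i, rfl⟩
  exact Ideal.subset_span (XkE_mem_gSpan_gen i)

lemma prod_coord_mem_span_XkE {n k : ℕ} (hn : 1 ≤ n) (hk : 1 ≤ k)
    (c : Fin (n * (k - 1) + 1) → Fin n) :
    (∏ j, XiE n (c j)) ∈ Ideal.span (Set.range (XkE n k)) := by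
  obtain ⟨i, hi⟩ := Fintype.exists_lt_card_fiber_of_mul_lt_card (f := c) (n := k - 1)
    (by simp)
  set s : Finset (Fin (n * (k - 1) + 1)) := Finset.univ.filter (fun j => c j = i) with hs
  have hcard : k ≤ s.card := by
    have := hi
    omega
  have hsplit : (∏ j, XiE n (c j))
      = (∏ j ∈ s, XiE n (c j)) * ∏ j ∈ Finset.univ.filter (fun j => ¬ c j = i), XiE n (c j) :=
    (Finset.prod_filter_mul_prod_filter_not Finset.univ _ _).symm
  have hsprod : (∏ j ∈ s, XiE n (c j)) = XiE n i ^ s.card := by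
    rw [Finset.prod_congr rfl (fun j hj => by rw [(Finset.mem_filter.1 hj).2])]
    exact Finset.prod_const _
  rw [hsplit, hsprod, show s.card = (s.card - k) + k from (Nat.sub_add_cancel hcard).symm,
    pow_add]
  rw [show XiE n i ^ k = XkE n k i from XiE_pow i k]
  have : XiE n i ^ (s.card - k) * XkE n k i
      * ∏ j ∈ Finset.univ.filter (fun j => ¬ c j = i), XiE n (c j)
      = (XiE n i ^ (s.card - k) * ∏ j ∈ Finset.univ.filter (fun j => ¬ c j = i), XiE n (c j))
        * XkE n k i := by ring
  rw [this]
  exact Ideal.mul_mem_left _ _ (Ideal.subset_span ⟨i, rfl⟩)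

lemma part1 {n k : ℕ} (hn : 1 ≤ n) (hk : 1 ≤ k) :
    ((mId n) ^ (n * (k - 1) + 1) : Ideal (En n))
      ≤ gSpan n (Set.range fun i : Fin n => fun x : Fin n → ℝ => x i ^ k) := by
  refine le_trans (prodSpan (n * (k - 1))) ?_
  refine le_trans (Ideal.span_le.2 ?_) span_XkE_le_gSpan
  rintro _ ⟨c, rfl⟩
  exact prod_coord_mem_span_XkE hn hk c

-- ## Part 2: the Jacobian ideal of `∑ x_i^{k+1}`

lemma pd_sum_pow {n k : ℕ} (i : Fin n) :
    pd i (fun x : Fin n → ℝ => ∑ j : Fin n, x j ^ (k + 1))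
      = fun x : Fin n → ℝ => (((k : ℝ) + 1) * x i ^ k) := by
  funext x
  have hder : HasFDerivAt (fun x : Fin n → ℝ => ∑ j : Fin n, x j ^ (k + 1))
      (∑ j : Fin n, (((k + 1 : ℕ) : ℝ) * x j ^ (k + 1 - 1)) •
        (ContinuousLinearMap.proj j : (Fin n → ℝ) →L[ℝ] ℝ)) x := by
    apply HasFDerivAt.fun_sum
    intro j _
    exact (hasDerivAt_pow (k + 1) (x j)).comp_hasFDerivAt x
      ((ContinuousLinearMap.proj j : (Fin n → ℝ) →L[ℝ] ℝ).hasFDerivAt)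
  show fderiv ℝ _ x (Pi.single i 1) = _
  rw [hder.fderiv]
  rw [ContinuousLinearMap.sum_apply]
  rw [Finset.sum_eq_single i]
  · simp
  · intro j _ hj
    simp [ContinuousLinearMap.proj_apply, Pi.single_apply, hj]
  · simp

lemma gSpan_range_eq {n : ℕ} {g h : Fin n → (Fin n → ℝ) → ℝ} (hgh : ∀ i, g i = h i) :
    gSpan n (Set.range g) = gSpan n (Set.range h) := by
  have : g = h := funext hgh
  rw [this]

lemma const_mul_germOf {n : ℕ} (c : ℝ) {f : (Fin n → ℝ) → ℝ} (hf : ContDiff ℝ ∞ f) :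
    constHom n c * germOf f hf = germOf (fun x => c * f x) (contDiff_const.mul hf) := by
  apply Subtype.ext
  show ((↑(fun _ : Fin n → ℝ => c) * ↑f) : Filter.Germ (nhds (0 : Fin n → ℝ)) ℝ) = _
  rw [← Filter.Germ.coe_mul]
  rfl

lemma part2 {n k : ℕ} (hk : 1 ≤ k) :
    JId n (fun x : Fin n → ℝ => ∑ i : Fin n, x i ^ (k + 1))
      = gSpan n (Set.range fun i : Fin n => fun x : Fin n → ℝ => x i ^ k) := by
  have hc : ((k : ℝ) + 1) ≠ 0 := by positivity
  rw [JId, gSpan_range_eq (fun i => pd_sum_pow i)]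
  apply le_antisymm
  · rw [gSpan, Ideal.span_le]
    rintro φ ⟨f, ⟨i, rfl⟩, hφ⟩
    have hφ' : φ = constHom n ((k : ℝ) + 1) * XkE n k i := by
      rw [show XkE n k i = germOf _ ((contDiff_coord i).pow k) from rfl, const_mul_germOf]
      exact Subtype.ext hφ
    rw [hφ']
    exact Ideal.mul_mem_left _ _ (Ideal.subset_span (XkE_mem_gSpan_gen i))
  · rw [gSpan, Ideal.span_le]
    rintro φ ⟨f, ⟨i, rfl⟩, hφ⟩
    have hφ' : φ = XkE n k i := Subtype.ext hφ
    have hgen : constHom n ((k : ℝ) + 1) * XkE n k i ∈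
        gSpan n (Set.range fun i : Fin n => fun x : Fin n → ℝ => ((k : ℝ) + 1) * x i ^ k) := by
      apply Ideal.subset_span
      refine ⟨fun x => ((k : ℝ) + 1) * x i ^ k, ⟨i, rfl⟩, ?_⟩
      rw [show XkE n k i = germOf _ ((contDiff_coord i).pow k) from rfl, const_mul_germOf]
      rfl
    have : φ = constHom n ((k : ℝ) + 1)⁻¹ * (constHom n ((k : ℝ) + 1) * XkE n k i) := by
      rw [← mul_assoc, ← map_mul, inv_mul_cancel₀ hc, map_one, one_mul, hφ']
    rw [this]
    exact Ideal.mul_mem_left _ _ hgen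

-- ## Part 3: monotonicity of `quotDim`

lemma quotDim_antitone {n : ℕ} {I J : Ideal (En n)} (h : I ≤ J) :
    quotDim n J ≤ quotDim n I := by
  set p := Submodule.comap (mId n).subtype (I : Submodule (En n) (En n))
  set q := Submodule.comap (mId n).subtype (J : Submodule (En n) (En n))
  have hpq : p ≤ q := Submodule.comap_mono h
  let f : (↥(mId n) ⧸ p) →ₗ[En n] (↥(mId n) ⧸ q) :=
    Submodule.mapQ p q LinearMap.id hpq
  have hsurj : Function.Surjective f := by
    intro y
    obtain ⟨x, rfl⟩ := Submodule.Quotient.mk_surjective q y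
    exact ⟨Submodule.Quotient.mk x, by simp [f, Submodule.mapQ_apply]⟩
  exact LinearMap.rank_le_of_surjective (f.restrictScalars ℝ) hsurj

-- ## Part 4: Taylor expansion with remainder in `m^N`

/-- Monomial germs of degree `1, …, N`. -/
def MSet (n N : ℕ) : Set (En n) := ⋃ m' ∈ Set.Iio N, PrSet n (m' + 1)

lemma MSet_mono {n N : ℕ} : MSet n N ⊆ MSet n (N + 1) := by
  apply Set.biUnion_subset_biUnion_left
  exact Set.Iio_subset_Iio (Nat.le_succ N)

lemma MSet_finite {n N : ℕ} : (MSet n N).Finite :=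
  (Set.finite_Iio N).biUnion fun m' _ => Set.finite_range _

lemma MSet_subset_mId {n N : ℕ} : MSet n N ⊆ (mId n : Set (En n)) := by
  intro φ hφ
  obtain ⟨m', hm', hφ⟩ := Set.mem_iUnion₂.1 hφ
  exact Ideal.pow_le_self (Nat.succ_ne_zero m') (PrSet_subset_pow hφ)

lemma exists_const_add_mem {n : ℕ} (a : En n) :
    ∃ b ∈ mId n, a = constHom n (germValue (a : Filter.Germ (nhds (0 : Fin n → ℝ)) ℝ)) + b := by
  refine ⟨a - constHom n (germValue (a : Filter.Germ (nhds (0 : Fin n → ℝ)) ℝ)), ?_, by ring⟩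
  show germValue _ = 0
  have hsub : ((a - constHom n (germValue (a : Filter.Germ (nhds (0 : Fin n → ℝ)) ℝ)) : En n) :
      Filter.Germ (nhds (0 : Fin n → ℝ)) ℝ)
      = (a : Filter.Germ (nhds (0 : Fin n → ℝ)) ℝ) -
        ((constHom n (germValue (a : Filter.Germ (nhds (0 : Fin n → ℝ)) ℝ)) : En n) :
          Filter.Germ (nhds (0 : Fin n → ℝ)) ℝ) := rfl
  rw [hsub, germValue_sub]
  have : germValue ((constHom n (germValue (a : Filter.Germ (nhds (0 : Fin n → ℝ)) ℝ)) : En n) :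
      Filter.Germ (nhds (0 : Fin n → ℝ)) ℝ)
      = germValue (a : Filter.Germ (nhds (0 : Fin n → ℝ)) ℝ) := rfl
  rw [this, sub_self]

lemma taylor {n : ℕ} : ∀ N : ℕ, 1 ≤ N →
    Submodule.restrictScalars ℝ ((mId n : Ideal (En n)) : Submodule (En n) (En n)) ≤
      Submodule.span ℝ (MSet n N) ⊔
        Submodule.restrictScalars ℝ (((mId n) ^ N : Ideal (En n)) : Submodule (En n) (En n)) := by
  refine Nat.le_induction ?_ ?_
  · intro φ hφ
    apply Submodule.mem_sup_right
    show φ ∈ (mId n) ^ 1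
    rwa [pow_one]
  · intro N hN ih
    suffices hsub : Submodule.span ℝ (MSet n N) ⊔
        Submodule.restrictScalars ℝ (((mId n) ^ N : Ideal (En n)) : Submodule (En n) (En n)) ≤
        Submodule.span ℝ (MSet n (N + 1)) ⊔
          Submodule.restrictScalars ℝ (((mId n) ^ (N + 1) : Ideal (En n)) :
            Submodule (En n) (En n)) by
      exact fun φ hφ => hsub (ih hφ)
    apply sup_le
    · exact (Submodule.span_mono MSet_mono).trans le_sup_left
    · intro ρ hρ
      obtain ⟨N', rfl⟩ : ∃ m, N = m + 1 := ⟨N - 1, (Nat.succ_pred_eq_of_pos hN).symm⟩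
      have hρ' : ρ ∈ Ideal.span (PrSet n (N' + 1)) := prodSpan N' hρ
      rw [Ideal.span, Submodule.mem_span_set'] at hρ'
      obtain ⟨s, f, g, hsum⟩ := hρ'
      rw [← hsum]
      apply Submodule.sum_mem
      intro i _
      obtain ⟨b, hb, hfi⟩ := exists_const_add_mem (f i)
      set v := germValue ((f i : En n) : Filter.Germ (nhds (0 : Fin n → ℝ)) ℝ)
      have hterm : f i • (g i : En n) = v • (g i : En n) + b * (g i : En n) := by
        rw [smul_eq_mul, hfi, add_mul, Algebra.smul_def]
        rfl
      rw [hterm]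
      apply Submodule.add_mem
      · apply Submodule.mem_sup_left
        apply Submodule.smul_mem
        apply Submodule.subset_span
        exact Set.mem_biUnion (Set.mem_Iio.2 (by omega)) (g i).2
      · apply Submodule.mem_sup_right
        show b * (g i : En n) ∈ (mId n) ^ (N' + 1 + 1)
        rw [pow_succ, mul_comm b ((g i : En n))]
        exact Ideal.mul_mem_mul (PrSet_subset_pow (g i).2) hb

-- ## Part 4: finiteness

lemma span_MSet_le {n N : ℕ} :
    Submodule.span ℝ (MSet n N) ≤
      Submodule.restrictScalars ℝ ((mId n : Ideal (En n)) : Submodule (En n) (En n)) :=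
  Submodule.span_le.2 fun _ hy => MSet_subset_mId hy

lemma part4 {n : ℕ} (N : ℕ) (hN : 1 ≤ N) :
    quotDim n ((mId n) ^ N) < Cardinal.aleph0 := by
  set V := ↥(mId n)
  set W : Submodule (En n) V := Submodule.comap (mId n).subtype
    (((mId n) ^ N : Ideal (En n)) : Submodule (En n) (En n)) with hW
  let π : V →ₗ[ℝ] (V ⧸ W) := W.mkQ.restrictScalars ℝ
  set liftSet : Set V := {v : V | (v : En n) ∈ MSet n N} with hliftSet
  have hlift : liftSet.Finite := by
    have : liftSet = Subtype.val ⁻¹' (MSet n N) := rfl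
    rw [this]
    exact Set.Finite.preimage (Set.injOn_of_injective Subtype.val_injective) MSet_finite
  have key : ∀ (x : En n) (hx : x ∈ Submodule.span ℝ (MSet n N)),
      ∀ h : x ∈ mId n, (⟨x, h⟩ : V) ∈ Submodule.span ℝ liftSet := by
    intro x hx
    induction hx using Submodule.span_induction with
    | mem x hmem => intro h; exact Submodule.subset_span hmem
    | zero =>
      intro h
      have : (⟨0, h⟩ : V) = 0 := rfl
      rw [this]; exact Submodule.zero_mem _
    | add x y hx hy ihx ihy =>
      intro h
      have hxm : x ∈ mId n := span_MSet_le hx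
      have hym : y ∈ mId n := span_MSet_le hy
      have : (⟨x + y, h⟩ : V) = ⟨x, hxm⟩ + ⟨y, hym⟩ := rfl
      rw [this]; exact Submodule.add_mem _ (ihx hxm) (ihy hym)
    | smul a x hx ihx =>
      intro h
      have hxm : x ∈ mId n := span_MSet_le hx
      have : (⟨a • x, h⟩ : V) = a • (⟨x, hxm⟩ : V) := rfl
      rw [this]; exact Submodule.smul_mem _ _ (ihx hxm)
  have hspanTop : Submodule.span ℝ (π '' liftSet) = ⊤ := by
    rw [Submodule.eq_top_iff']
    intro q
    obtain ⟨v, rfl⟩ := Submodule.Quotient.mk_surjective W q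
    have hv := taylor N hN (show (v : En n) ∈
      Submodule.restrictScalars ℝ ((mId n : Ideal (En n)) : Submodule (En n) (En n)) from v.2)
    rw [Submodule.mem_sup] at hv
    obtain ⟨ψ, hψ, ρ, hρ, hvsum⟩ := hv
    have hψm : ψ ∈ mId n := span_MSet_le hψ
    have hq : Submodule.Quotient.mk v = π ⟨ψ, hψm⟩ := by
      show _ = Submodule.Quotient.mk (⟨ψ, hψm⟩ : V)
      rw [Submodule.Quotient.eq]
      show ((v - ⟨ψ, hψm⟩ : V) : En n) ∈ (mId n) ^ N
      have : ((v - ⟨ψ, hψm⟩ : V) : En n) = ρ := by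
        have hv1 : (v : En n) = ψ + ρ := hvsum.symm
        rw [AddSubgroupClass.coe_sub, hv1]; ring
      rw [this]; exact hρ
    rw [hq]
    exact Submodule.apply_mem_span_image_of_mem_span π (key ψ hψ hψm)
  have hfin : Module.Finite ℝ (V ⧸ W) :=
    ⟨⟨(hlift.image π).toFinset, by rw [Set.Finite.coe_toFinset]; exact hspanTop⟩⟩
  exact Module.rank_lt_aleph0 ℝ (V ⧸ W)

/-- The ideal of `E_n` generated by `x_1^k, …, x_n^k` contains
`m_n^{n(k-1)+1}`; the Jacobian ideal of `r = x_1^{k+1} + … + x_n^{k+1}` equals the ideal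
generated by `x_1^k, …, x_n^k`; and the codimension of `r` is at most
`a_k = dim_ℝ(m_n/m_n^{n(k-1)+1})`, which is finite. -/
theorem statement7 (n k : ℕ) (hn : 1 ≤ n) (hk : 1 ≤ k) :
    ((mId n) ^ (n * (k - 1) + 1) : Ideal (En n))
        ≤ gSpan n (Set.range fun i : Fin n => fun x : Fin n → ℝ => x i ^ k) ∧
      JId n (fun x : Fin n → ℝ => ∑ i : Fin n, x i ^ (k + 1))
        = gSpan n (Set.range fun i : Fin n => fun x : Fin n → ℝ => x i ^ k) ∧
      codim n (fun x : Fin n → ℝ => ∑ i : Fin n, x i ^ (k + 1))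
        ≤ quotDim n ((mId n) ^ (n * (k - 1) + 1)) ∧
      quotDim n ((mId n) ^ (n * (k - 1) + 1)) < Cardinal.aleph0 := by
  refine ⟨part1 hn hk, part2 hk, ?_, part4 _ (by omega)⟩
  rw [codim, part2 hk]
  exact quotDim_antitone (part1 hn hk)
end
end

section
/- Let f be a smooth real-valued function defined on an open neighborhood of 0 in ℝⁿ with df(0) = 0 (equivalently, the germ of f − f(0) at 0 lies in m_n²). If the codimension of the germ of f at 0 is finite, i.e., dim_ℝ(m_n/J(f)) < ∞, then 0 is an isolated singularity of f: there exists an open neighborhood U of 0 such that df(x) ≠ 0 for every x ∈ U with x ≠ 0. -/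
open Filter Topology
open scoped ContDiff

set_option synthInstance.maxHeartbeats 400000

noncomputable section

/-- Restriction of germs along a smaller filter, as a ring hom. -/
def restrGerm {α : Type*} {l l' : Filter α} (h : l' ≤ l) :
    Filter.Germ l ℝ →+* Filter.Germ l' ℝ where
  toFun φ := φ.compTendsto id (tendsto_id.mono_left h)
  map_one' := rfl
  map_mul' a b := by
    refine a.inductionOn ?_; intro f; refine b.inductionOn ?_; intro g; rfl
  map_zero' := rfl
  map_add' a b := by
    refine a.inductionOn ?_; intro f; refine b.inductionOn ?_; intro g; rfl

@[simp] lemma restrGerm_coe {α : Type*} {l l' : Filter α} (h : l' ≤ l) (g : α → ℝ) :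
    restrGerm h (↑g) = (↑g : Filter.Germ l' ℝ) := rfl

/-- Every element of the Jacobian ideal vanishes, as a germ along the critical set of `f`. -/
lemma JId_vanish {n : ℕ} (f : (Fin n → ℝ) → ℝ) {φ : En n} (hφ : φ ∈ JId n f) :
    restrGerm (inf_le_left : 𝓝 (0 : Fin n → ℝ) ⊓ Filter.principal {x | fderiv ℝ f x = 0} ≤ _)
      (φ : Filter.Germ (𝓝 (0 : Fin n → ℝ)) ℝ) = 0 := by
  set l' := 𝓝 (0 : Fin n → ℝ) ⊓ Filter.principal {x | fderiv ℝ f x = 0}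
  have hle : l' ≤ 𝓝 (0 : Fin n → ℝ) := inf_le_left
  have : φ ∈ RingHom.ker ((restrGerm hle).comp (En n).subtype) := by
    refine Ideal.span_le.mpr ?_ hφ
    rintro ψ ⟨g, ⟨i, rfl⟩, hg⟩
    show (restrGerm hle) (ψ : Filter.Germ (𝓝 (0 : Fin n → ℝ)) ℝ) = 0
    rw [hg, restrGerm_coe]
    rw [show (0 : Filter.Germ l' ℝ) = ((0 : (Fin n → ℝ) → ℝ) : Filter.Germ l' ℝ) from rfl,
      Filter.Germ.coe_eq]
    rw [Filter.EventuallyEq, eventually_inf_principal]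
    filter_upwards with x hx
    simp [pd, hx]
  exact this

set_option maxHeartbeats 1000000

/-- Key step: for each coordinate `i` there is a nonzero polynomial vanishing on the `i`-th
coordinates of all critical points of `f` near `0`. -/
lemma exists_poly {n : ℕ} (f : (Fin n → ℝ) → ℝ) (hfin : codim n f < Cardinal.aleph0)
    (i : Fin n) :
    ∃ p : Polynomial ℝ, p ≠ 0 ∧
      ∀ᶠ x in 𝓝 (0 : Fin n → ℝ), fderiv ℝ f x = 0 → p.eval (x i) = 0 := by
  classical
  set N : Submodule (En n) ↥(mId n) :=
    Submodule.comap (mId n).subtype ((JId n f : Ideal (En n)) : Submodule (En n) (En n)) with hN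
  haveI : Module.Finite ℝ (↥(mId n) ⧸ N) := Module.rank_lt_aleph0_iff.mp hfin
  set d := Module.finrank ℝ (↥(mId n) ⧸ N) with hd
  -- the germs of the functions `x ↦ (x i) ^ (j+1)`
  have hsmooth : ∀ j : Fin (d+1), ContDiff ℝ ∞ (fun x : Fin n → ℝ => (x i) ^ ((j : ℕ)+1)) :=
    fun j => (contDiff_apply ℝ ℝ i).pow _
  have hmem : ∀ j : Fin (d+1), germOf _ (hsmooth j) ∈ mId n := by
    intro j
    show germValue (↑(fun x : Fin n → ℝ => (x i) ^ ((j : ℕ)+1)) :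
        Filter.Germ (𝓝 (0 : Fin n → ℝ)) ℝ) = 0
    rw [germValue_coe]
    simp
  set φ : Fin (d+1) → ↥(mId n) := fun j => ⟨germOf _ (hsmooth j), hmem j⟩ with hφ
  set v : Fin (d+1) → (↥(mId n) ⧸ N) := fun j => Submodule.Quotient.mk (φ j) with hv
  have hnli : ¬ LinearIndependent ℝ v := by
    intro h
    have := h.fintype_card_le_finrank
    simp [← hd] at this
  obtain ⟨c, hsum, k, hk⟩ := Fintype.not_linearIndependent_iff.mp hnli
  -- the combination lies in `J(f)`
  have hcomb : (((∑ j, c j • φ j : ↥(mId n)) : En n)) ∈ JId n f := by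
    have h0 : Submodule.Quotient.mk (p := N) (∑ j, c j • φ j) = 0 := by
      rw [show Submodule.Quotient.mk (p := N) = ⇑N.mkQ from rfl, map_sum]
      simpa [hv, Submodule.Quotient.mk_smul] using hsum
    rw [Submodule.Quotient.mk_eq_zero] at h0
    exact h0
  -- compute the underlying germ of the combination
  set g : (Fin n → ℝ) → ℝ := fun x => ∑ j : Fin (d+1), c j * (x i) ^ ((j : ℕ)+1) with hg
  have hval : (((∑ j, c j • φ j : ↥(mId n)) : En n) : Filter.Germ (𝓝 (0 : Fin n → ℝ)) ℝ)
      = ↑g := by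
    have h1 : ((∑ j, c j • φ j : ↥(mId n)) : En n) = ∑ j, c j • (φ j : En n) := by
      push_cast
      rfl
    rw [h1]
    have h2 : ((∑ j, c j • (φ j : En n) : En n) : Filter.Germ (𝓝 (0 : Fin n → ℝ)) ℝ)
        = ∑ j, ((c j • (φ j : En n) : En n) : Filter.Germ (𝓝 (0 : Fin n → ℝ)) ℝ) := by
      exact map_sum (En n).subtype _ _
    rw [h2]
    have h3 : ∀ j : Fin (d+1),
        ((c j • (φ j : En n) : En n) : Filter.Germ (𝓝 (0 : Fin n → ℝ)) ℝ)
          = ↑(fun x : Fin n → ℝ => c j * (x i) ^ ((j : ℕ)+1)) := by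
      intro j
      have : c j • (φ j : En n) = constHom n (c j) * (φ j : En n) := Algebra.smul_def _ _
      rw [this]
      show ((constHom n (c j) : En n) : Filter.Germ (𝓝 (0 : Fin n → ℝ)) ℝ)
          * ((φ j : En n) : Filter.Germ (𝓝 (0 : Fin n → ℝ)) ℝ) = _
      show (↑(fun _ : Fin n → ℝ => c j) : Filter.Germ (𝓝 (0 : Fin n → ℝ)) ℝ)
          * ↑(fun x : Fin n → ℝ => (x i) ^ ((j : ℕ)+1)) = _
      rw [← Filter.Germ.coe_mul]
      rfl
    rw [Finset.sum_congr rfl fun j _ => h3 j]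
    rw [hg]
    have h4 := map_sum (Filter.Germ.coeRingHom (𝓝 (0 : Fin n → ℝ)))
      (fun j : Fin (d+1) => fun x : Fin n → ℝ => c j * (x i) ^ ((j : ℕ)+1)) Finset.univ
    rw [show (fun x : Fin n → ℝ => ∑ j : Fin (d+1), c j * (x i) ^ ((j : ℕ)+1))
        = ∑ j : Fin (d+1), (fun x : Fin n → ℝ => c j * (x i) ^ ((j : ℕ)+1)) from
      funext fun x => by simp]
    exact h4.symm
  -- the polynomial
  refine ⟨∑ j : Fin (d+1), Polynomial.C (c j) * Polynomial.X ^ ((j : ℕ)+1), ?_, ?_⟩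
  · intro h
    apply hk
    have := congrArg (fun p => Polynomial.coeff p ((k : ℕ)+1)) h
    simpa [Polynomial.finset_sum_coeff, Polynomial.coeff_C_mul, Polynomial.coeff_X_pow,
      Fin.val_inj, Finset.sum_ite_eq] using this
  · have h0 := JId_vanish f hcomb
    rw [hval, restrGerm_coe] at h0
    rw [show (0 : Filter.Germ (𝓝 (0 : Fin n → ℝ) ⊓
        Filter.principal {x | fderiv ℝ f x = 0}) ℝ)
        = ((0 : (Fin n → ℝ) → ℝ) : _) from rfl, Filter.Germ.coe_eq] at h0
    rw [Filter.EventuallyEq, eventually_inf_principal] at h0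
    filter_upwards [h0] with x hx hcrit
    have := hx hcrit
    simpa [Polynomial.eval_finset_sum, hg] using this

/-- If `f` is smooth on an open neighborhood `W` of `0`, `df(0) = 0`, and
the codimension of the germ of `f` at `0` is finite, then `0` is an isolated singularity of
`f`: there is an open neighborhood `U` of `0` (inside `W`) on which `df(x) ≠ 0` for all
`x ≠ 0`. -/
theorem statement9 (n : ℕ) (hn : 1 ≤ n) (W : Set (Fin n → ℝ)) (hW : IsOpen W)
    (h0W : (0 : Fin n → ℝ) ∈ W) (f : (Fin n → ℝ) → ℝ) (hf : ContDiffOn ℝ ∞ f W)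
    (hdf : fderiv ℝ f 0 = 0) (hfin : codim n f < Cardinal.aleph0) :
    ∃ U : Set (Fin n → ℝ), IsOpen U ∧ (0 : Fin n → ℝ) ∈ U ∧ U ⊆ W ∧
      ∀ x ∈ U, x ≠ 0 → fderiv ℝ f x ≠ 0 := by
  classical
  choose p hp hev using fun i => exists_poly f hfin i
  have hall : ∀ᶠ x in 𝓝 (0 : Fin n → ℝ), ∀ i, fderiv ℝ f x = 0 → (p i).eval (x i) = 0 :=
    eventually_all.mpr hev
  obtain ⟨V, hV, hVopen, hV0⟩ := eventually_nhds_iff.mp hall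
  set T : Set (Fin n → ℝ) := Set.pi Set.univ fun i => {t | (p i).IsRoot t} with hT
  have hTfin : T.Finite := Set.Finite.pi fun i => Polynomial.finite_setOf_isRoot (hp i)
  have hclosed : IsClosed (T \ {0}) := hTfin.diff.isClosed
  refine ⟨W ∩ V ∩ (T \ {0})ᶜ, (hW.inter hVopen).inter hclosed.isOpen_compl,
    ⟨⟨h0W, hV0⟩, fun h => h.2 rfl⟩, fun x hx => hx.1.1, ?_⟩
  rintro x ⟨⟨hxW, hxV⟩, hxT⟩ hx0 hcrit
  apply hxT
  refine ⟨?_, hx0⟩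
  intro i _
  exact hV x hxV i hcrit
end
end
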